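/- Let G be a chordal graph containing a 6-cycle on vertices a, b, c, d, e, f with edges ab, bc, cd, de, ef, fa. If bd, ce, and cf are not edges of G, then ac and ad are edges of G. -/

import Mathlib

open SimpleGraph

/-- `f : ZMod n → V` traces an induced cycle of length `n` in `G`:
`f` is injective and adjacency holds exactly between consecutive vertices. -/
def IsInducedCycle {V : Type*} (G : SimpleGraph V) (n : ℕ) (f : ZMod n → V) : Prop :=
  Function.Injective f ∧ ∀ i j : ZMod n, G.Adj (f i) (f j) ↔ (j = i + 1 ∨ i = j + 1)

/-- A graph is chordal if it has no induced cycle of length at least 4. -/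
def Chordal {V : Type*} (G : SimpleGraph V) : Prop :=
  ∀ n, 4 ≤ n → ∀ f : ZMod n → V, ¬ IsInducedCycle G n f

/-- `G'` is a chordal completion of `G`. -/
def ChordalCompletion {V : Type*} (G G' : SimpleGraph V) : Prop :=
  Chordal G' ∧ G ≤ G'

/-- Minimal chordal completion: no proper spanning subgraph containing `G` is chordal. -/
def MinimalChordalCompletion {V : Type*} (G G' : SimpleGraph V) : Prop :=
  ChordalCompletion G G' ∧ ∀ H, ChordalCompletion G H → H ≤ G' → H = G'

lemma zmod4_cases : ∀ i : ZMod 4, i = 0 ∨ i = 1 ∨ i = 2 ∨ i = 3 := by decide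

lemma zmod5_cases : ∀ i : ZMod 5, i = 0 ∨ i = 1 ∨ i = 2 ∨ i = 3 ∨ i = 4 := by decide

lemma zmod6_cases : ∀ i : ZMod 6, i = 0 ∨ i = 1 ∨ i = 2 ∨ i = 3 ∨ i = 4 ∨ i = 5 := by decide

lemma cycle4 {V : Type*} (G : SimpleGraph V) (v0 v1 v2 v3 : V)
    (h01 : v0 ≠ v1) (h02 : v0 ≠ v2) (h03 : v0 ≠ v3) (h12 : v1 ≠ v2)
    (h13 : v1 ≠ v3) (h23 : v2 ≠ v3)
    (a01 : G.Adj v0 v1) (a12 : G.Adj v1 v2) (a23 : G.Adj v2 v3) (a30 : G.Adj v3 v0)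
    (n02 : ¬G.Adj v0 v2) (n13 : ¬G.Adj v1 v3) :
    IsInducedCycle G 4 ![v0,v1,v2,v3] := by
  have e0 : ![v0,v1,v2,v3] (0 : ZMod 4) = v0 := rfl
  have e1 : ![v0,v1,v2,v3] (1 : ZMod 4) = v1 := rfl
  have e2 : ![v0,v1,v2,v3] (2 : ZMod 4) = v2 := rfl
  have e3 : ![v0,v1,v2,v3] (3 : ZMod 4) = v3 := rfl
  constructor
  · intro i j h
    rcases zmod4_cases i with rfl|rfl|rfl|rfl <;> rcases zmod4_cases j with rfl|rfl|rfl|rfl <;>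
      simp only [e0, e1, e2, e3] at h <;>
      first
      | rfl
      | exact absurd h (by assumption)
      | exact absurd h.symm (by assumption)
  · intro i j
    rcases zmod4_cases i with rfl|rfl|rfl|rfl <;> rcases zmod4_cases j with rfl|rfl|rfl|rfl <;>
      simp only [e0, e1, e2, e3] <;>
      first
      | exact iff_of_false (G.loopless.irrefl _) (by decide)
      | exact iff_of_true (by assumption) (by decide)
      | exact iff_of_true (Adj.symm (by assumption)) (by decide)
      | exact iff_of_false (by assumption) (by decide)
      | exact iff_of_false (fun h => absurd h.symm (by assumption)) (by decide)

lemma cycle5 {V : Type*} (G : SimpleGraph V) (v0 v1 v2 v3 v4 : V)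
    (h01 : v0 ≠ v1) (h02 : v0 ≠ v2) (h03 : v0 ≠ v3) (h04 : v0 ≠ v4)
    (h12 : v1 ≠ v2) (h13 : v1 ≠ v3) (h14 : v1 ≠ v4)
    (h23 : v2 ≠ v3) (h24 : v2 ≠ v4) (h34 : v3 ≠ v4)
    (a01 : G.Adj v0 v1) (a12 : G.Adj v1 v2) (a23 : G.Adj v2 v3) (a34 : G.Adj v3 v4)
    (a40 : G.Adj v4 v0)
    (n02 : ¬G.Adj v0 v2) (n03 : ¬G.Adj v0 v3) (n13 : ¬G.Adj v1 v3)
    (n14 : ¬G.Adj v1 v4) (n24 : ¬G.Adj v2 v4) :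
    IsInducedCycle G 5 ![v0,v1,v2,v3,v4] := by
  have e0 : ![v0,v1,v2,v3,v4] (0 : ZMod 5) = v0 := rfl
  have e1 : ![v0,v1,v2,v3,v4] (1 : ZMod 5) = v1 := rfl
  have e2 : ![v0,v1,v2,v3,v4] (2 : ZMod 5) = v2 := rfl
  have e3 : ![v0,v1,v2,v3,v4] (3 : ZMod 5) = v3 := rfl
  have e4 : ![v0,v1,v2,v3,v4] (4 : ZMod 5) = v4 := rfl
  constructor
  · intro i j h
    rcases zmod5_cases i with rfl|rfl|rfl|rfl|rfl <;>
      rcases zmod5_cases j with rfl|rfl|rfl|rfl|rfl <;>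
      simp only [e0, e1, e2, e3, e4] at h <;>
      first
      | rfl
      | exact absurd h (by assumption)
      | exact absurd h.symm (by assumption)
  · intro i j
    rcases zmod5_cases i with rfl|rfl|rfl|rfl|rfl <;>
      rcases zmod5_cases j with rfl|rfl|rfl|rfl|rfl <;>
      simp only [e0, e1, e2, e3, e4] <;>
      first
      | exact iff_of_false (G.loopless.irrefl _) (by decide)
      | exact iff_of_true (by assumption) (by decide)
      | exact iff_of_true (Adj.symm (by assumption)) (by decide)
      | exact iff_of_false (by assumption) (by decide)
      | exact iff_of_false (fun h => absurd h.symm (by assumption)) (by decide)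

lemma cycle6 {V : Type*} (G : SimpleGraph V) (v0 v1 v2 v3 v4 v5 : V)
    (h01 : v0 ≠ v1) (h02 : v0 ≠ v2) (h03 : v0 ≠ v3) (h04 : v0 ≠ v4) (h05 : v0 ≠ v5)
    (h12 : v1 ≠ v2) (h13 : v1 ≠ v3) (h14 : v1 ≠ v4) (h15 : v1 ≠ v5)
    (h23 : v2 ≠ v3) (h24 : v2 ≠ v4) (h25 : v2 ≠ v5)
    (h34 : v3 ≠ v4) (h35 : v3 ≠ v5) (h45 : v4 ≠ v5)
    (a01 : G.Adj v0 v1) (a12 : G.Adj v1 v2) (a23 : G.Adj v2 v3) (a34 : G.Adj v3 v4)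
    (a45 : G.Adj v4 v5) (a50 : G.Adj v5 v0)
    (n02 : ¬G.Adj v0 v2) (n03 : ¬G.Adj v0 v3) (n04 : ¬G.Adj v0 v4)
    (n13 : ¬G.Adj v1 v3) (n14 : ¬G.Adj v1 v4) (n15 : ¬G.Adj v1 v5)
    (n24 : ¬G.Adj v2 v4) (n25 : ¬G.Adj v2 v5) (n35 : ¬G.Adj v3 v5) :
    IsInducedCycle G 6 ![v0,v1,v2,v3,v4,v5] := by
  have e0 : ![v0,v1,v2,v3,v4,v5] (0 : ZMod 6) = v0 := rfl
  have e1 : ![v0,v1,v2,v3,v4,v5] (1 : ZMod 6) = v1 := rfl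
  have e2 : ![v0,v1,v2,v3,v4,v5] (2 : ZMod 6) = v2 := rfl
  have e3 : ![v0,v1,v2,v3,v4,v5] (3 : ZMod 6) = v3 := rfl
  have e4 : ![v0,v1,v2,v3,v4,v5] (4 : ZMod 6) = v4 := rfl
  have e5 : ![v0,v1,v2,v3,v4,v5] (5 : ZMod 6) = v5 := rfl
  constructor
  · intro i j h
    rcases zmod6_cases i with rfl|rfl|rfl|rfl|rfl|rfl <;>
      rcases zmod6_cases j with rfl|rfl|rfl|rfl|rfl|rfl <;>
      simp only [e0, e1, e2, e3, e4, e5] at h <;>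
      first
      | rfl
      | exact absurd h (by assumption)
      | exact absurd h.symm (by assumption)
  · intro i j
    rcases zmod6_cases i with rfl|rfl|rfl|rfl|rfl|rfl <;>
      rcases zmod6_cases j with rfl|rfl|rfl|rfl|rfl|rfl <;>
      simp only [e0, e1, e2, e3, e4, e5] <;>
      first
      | exact iff_of_false (G.loopless.irrefl _) (by decide)
      | exact iff_of_true (by assumption) (by decide)
      | exact iff_of_true (Adj.symm (by assumption)) (by decide)
      | exact iff_of_false (by assumption) (by decide)
      | exact iff_of_false (fun h => absurd h.symm (by assumption)) (by decide)

theorem stmt_6 {V : Type*} (G : SimpleGraph V) (hG : Chordal G)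
    (a b c d e f : V) (hdist : [a, b, c, d, e, f].Pairwise (· ≠ ·))
    (hab : G.Adj a b) (hbc : G.Adj b c) (hcd : G.Adj c d)
    (hde : G.Adj d e) (hef : G.Adj e f) (hfa : G.Adj f a)
    (hbd : ¬ G.Adj b d) (hce : ¬ G.Adj c e) (hcf : ¬ G.Adj c f) :
    G.Adj a c ∧ G.Adj a d := by
  simp only [List.pairwise_cons] at hdist
  obtain ⟨ha', hb', hc', hd', he', -⟩ := hdist
  have nab : a ≠ b := ha' b (by simp)
  have nac : a ≠ c := ha' c (by simp)
  have nad : a ≠ d := ha' d (by simp)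
  have nae : a ≠ e := ha' e (by simp)
  have naf : a ≠ f := ha' f (by simp)
  have nbc : b ≠ c := hb' c (by simp)
  have nbd : b ≠ d := hb' d (by simp)
  have nbe : b ≠ e := hb' e (by simp)
  have nbf : b ≠ f := hb' f (by simp)
  have ncd : c ≠ d := hc' d (by simp)
  have nce : c ≠ e := hc' e (by simp)
  have ncf : c ≠ f := hc' f (by simp)
  have nde : d ≠ e := hd' e (by simp)
  have ndf : d ≠ f := hd' f (by simp)
  have nef : e ≠ f := he' f (by simp)
  -- b and e are never adjacent: otherwise b-c-d-e is an induced 4-cycle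
  have hbe : ¬ G.Adj b e := fun hbe =>
    hG 4 (by norm_num) _ (cycle4 G b c d e nbc nbd nbe ncd nce nde hbc hcd hde hbe.symm hbd hce)
  have hac : G.Adj a c := by
    by_contra hac
    by_cases had : G.Adj a d
    · exact hG 4 (by norm_num) _
        (cycle4 G a b c d nab nac nad nbc nbd ncd hab hbc hcd had.symm hac hbd)
    · by_cases hae : G.Adj a e
      · exact hG 5 (by norm_num) _
          (cycle5 G a b c d e nab nac nad nae nbc nbd nbe ncd nce nde
            hab hbc hcd hde hae.symm hac had hbd hbe hce)
      · by_cases hdf : G.Adj d f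
        · by_cases hbf : G.Adj b f
          · exact hG 4 (by norm_num) _
              (cycle4 G b c d f nbc nbd nbf ncd ncf ndf hbc hcd hdf hbf.symm hbd hcf)
          · exact hG 5 (by norm_num) _
              (cycle5 G a b c d f nab nac nad naf nbc nbd nbf ncd ncf ndf
                hab hbc hcd hdf hfa hac had hbd hbf hcf)
        · by_cases hbf : G.Adj b f
          · exact hG 5 (by norm_num) _
              (cycle5 G b c d e f nbc nbd nbe nbf ncd nce ncf nde ndf nef
                hbc hcd hde hef hbf.symm hbd hbe hce hcf hdf)
          · exact hG 6 (by norm_num) _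
              (cycle6 G a b c d e f nab nac nad nae naf nbc nbd nbe nbf ncd nce ncf nde ndf nef
                hab hbc hcd hde hef hfa hac had hae hbd hbe hbf hce hcf hdf)
  refine ⟨hac, ?_⟩
  by_contra had
  by_cases hae : G.Adj a e
  · exact hG 4 (by norm_num) _
      (cycle4 G a c d e nac nad nae ncd nce nde hac hcd hde hae.symm had hce)
  · by_cases hdf : G.Adj d f
    · exact hG 4 (by norm_num) _
        (cycle4 G a c d f nac nad naf ncd ncf ndf hac hcd hdf hfa had hcf)
    · exact hG 5 (by norm_num) _
        (cycle5 G a c d e f nac nad nae naf ncd nce ncf nde ndf nef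
          hac hcd hde hef hfa had hae hce hcf hdf)
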